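/- Let G₁ be the group of finitely supported even permutations of ℕ that fix the point 1, and let G be the group of all finitely supported even permutations of ℕ. If δ : G₁ → G is a group homomorphism satisfying δ(a) = a for every element a ∈ G₁ of order 2, then δ(σ) = σ for all σ ∈ G₁. -/

import Mathlib

/-- A transposition of two distinct points of `ℕ`. -/
def IsSwapPerm (τ : Equiv.Perm ℕ) : Prop := ∃ a b : ℕ, a ≠ b ∧ τ = Equiv.swap a b

/-- The group of finitely supported even permutations of `ℕ`, realized as the subgroup of
`Equiv.Perm ℕ` of products of an even number of transpositions. -/
def evenFin : Subgroup (Equiv.Perm ℕ) where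
  carrier := {σ | ∃ l : List (Equiv.Perm ℕ),
    (∀ τ ∈ l, IsSwapPerm τ) ∧ Even l.length ∧ l.prod = σ}
  one_mem' := ⟨[], by simp, by simp, rfl⟩
  mul_mem' := by
    rintro σ₁ σ₂ ⟨l₁, h₁, e₁, p₁⟩ ⟨l₂, h₂, e₂, p₂⟩
    refine ⟨l₁ ++ l₂, ?_, ?_, by rw [List.prod_append, p₁, p₂]⟩
    · intro τ hτ
      rcases List.mem_append.1 hτ with h | h
      · exact h₁ τ h
      · exact h₂ τ h
    · simpa using e₁.add e₂
  inv_mem' := by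
    rintro σ ⟨l, h, e, p⟩
    refine ⟨(l.map (·⁻¹)).reverse, ?_, by simpa using e, ?_⟩
    · intro τ hτ
      rw [List.mem_reverse, List.mem_map] at hτ
      obtain ⟨τ', hτ', rfl⟩ := hτ
      obtain ⟨a, b, hab, rfl⟩ := h τ' hτ'
      exact ⟨a, b, hab, by simp [Equiv.Perm.inv_def]⟩
    · rw [← List.prod_inv_reverse, p]

/-- The subgroup of `evenFin` of those permutations fixing `1 ∈ ℕ`. -/
def evenFinFixOne : Subgroup (Equiv.Perm ℕ) :=
  evenFin ⊓ MulAction.stabilizer (Equiv.Perm ℕ) (1 : ℕ)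


/-- Double transpositions avoiding the point 1. -/
def dtSet : Set (Equiv.Perm ℕ) :=
  {x | ∃ a b e f : ℕ, a ≠ b ∧ e ≠ f ∧ a ≠ 1 ∧ b ≠ 1 ∧ e ≠ 1 ∧ f ≠ 1 ∧
    e ≠ a ∧ e ≠ b ∧ f ≠ a ∧ f ≠ b ∧ x = Equiv.swap a b * Equiv.swap e f}

lemma dt_fix_one {x : Equiv.Perm ℕ} (hx : x ∈ dtSet) : x 1 = 1 := by
  obtain ⟨a, b, e, f, hab, hef, ha, hb, he, hf, hea, heb, hfa, hfb, rfl⟩ := hx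
  simp [Equiv.swap_apply_of_ne_of_ne (Ne.symm ha) (Ne.symm hb),
    Equiv.swap_apply_of_ne_of_ne (Ne.symm he) (Ne.symm hf)]

lemma dt_mem {x : Equiv.Perm ℕ} (hx : x ∈ dtSet) : x ∈ evenFinFixOne := by
  obtain ⟨a, b, e, f, hab, hef, ha, hb, he, hf, hea, heb, hfa, hfb, rfl⟩ := hx
  refine Subgroup.mem_inf.mpr ⟨?_, ?_⟩
  · refine ⟨[Equiv.swap a b, Equiv.swap e f], ?_, by simp, by simp⟩
    rintro τ hτ
    simp only [List.mem_cons, List.mem_singleton] at hτ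
    rcases hτ with rfl | rfl | h
    · exact ⟨a, b, hab, rfl⟩
    · exact ⟨e, f, hef, rfl⟩
    · cases h
  · rw [MulAction.mem_stabilizer_iff]
    show (Equiv.swap a b * Equiv.swap e f) 1 = 1
    exact dt_fix_one ⟨a, b, e, f, hab, hef, ha, hb, he, hf, hea, heb, hfa, hfb, rfl⟩

lemma dt_orderOf {x : Equiv.Perm ℕ} (hx : x ∈ dtSet) : orderOf x = 2 := by
  obtain ⟨a, b, e, f, hab, hef, ha, hb, he, hf, hea, heb, hfa, hfb, rfl⟩ := hx
  have hcomm : Commute (Equiv.swap a b) (Equiv.swap e f) := by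
    apply Equiv.Perm.Disjoint.commute
    intro x
    by_cases hxa : x = a
    · subst hxa; right; exact Equiv.swap_apply_of_ne_of_ne (Ne.symm hea) (Ne.symm hfa)
    by_cases hxb : x = b
    · subst hxb; right; exact Equiv.swap_apply_of_ne_of_ne (Ne.symm heb) (Ne.symm hfb)
    · left; exact Equiv.swap_apply_of_ne_of_ne hxa hxb
  apply orderOf_eq_prime
  · rw [hcomm.mul_pow]
    simp [sq, Equiv.swap_mul_self]
  · intro h1
    have : (Equiv.swap a b * Equiv.swap e f) a = a := by rw [h1]; rfl
    rw [Equiv.Perm.mul_apply, Equiv.swap_apply_of_ne_of_ne (Ne.symm hea) (Ne.symm hfa),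
      Equiv.swap_apply_left] at this
    exact hab this.symm

lemma swap_list_bound : ∀ l : List (Equiv.Perm ℕ), (∀ τ ∈ l, IsSwapPerm τ) →
    ∃ M : ℕ, 2 ≤ M ∧ ∀ τ ∈ l, ∀ x, M ≤ x → τ x = x
  | [], _ => ⟨2, le_refl 2, by simp⟩
  | τ₀ :: l, h => by
    obtain ⟨M, hM2, hM⟩ := swap_list_bound l (fun τ hτ => h τ (List.mem_cons_of_mem _ hτ))
    obtain ⟨a, b, hab, rfl⟩ := h τ₀ List.mem_cons_self
    refine ⟨max M (max a b + 1), le_trans hM2 (le_max_left _ _), ?_⟩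
    intro τ hτ x hx
    rcases List.mem_cons.mp hτ with rfl | hτ
    · have h1 : max a b + 1 ≤ x := le_trans (le_max_right _ _) hx
      exact Equiv.swap_apply_of_ne_of_ne (by omega) (by omega)
    · exact hM τ hτ x (le_trans (le_max_left _ _) hx)

lemma prod_fixes : ∀ (l : List (Equiv.Perm ℕ)) (x : ℕ), (∀ τ ∈ l, τ x = x) → l.prod x = x
  | [], _, _ => rfl
  | τ₀ :: l, x, h => by
    rw [List.prod_cons, Equiv.Perm.mul_apply,
      prod_fixes l x (fun τ hτ => h τ (List.mem_cons_of_mem _ hτ)), h τ₀ List.mem_cons_self]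

lemma conj_fix {σ : Equiv.Perm ℕ} {N : ℕ} (h1 : σ 1 = 1) (hN : σ N = N) :
    Equiv.swap 1 N * σ * Equiv.swap 1 N = σ := by
  ext x
  by_cases hx1 : x = 1
  · subst hx1
    simp [Equiv.Perm.mul_apply, hN, h1]
  by_cases hxN : x = N
  · subst hxN
    simp [Equiv.Perm.mul_apply, hN, h1]
  · rw [Equiv.Perm.mul_apply, Equiv.Perm.mul_apply,
      Equiv.swap_apply_of_ne_of_ne hx1 hxN]
    have hσ1 : σ x ≠ 1 := fun hc => hx1 (σ.injective (by rw [hc, h1]))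
    have hσN : σ x ≠ N := fun hc => hxN (σ.injective (by rw [hc, hN]))
    exact Equiv.swap_apply_of_ne_of_ne hσ1 hσN

lemma lemE : ∀ l : List (Equiv.Perm ℕ),
    (∀ τ ∈ l, ∃ a b : ℕ, a ≠ b ∧ a ≠ 1 ∧ b ≠ 1 ∧ τ = Equiv.swap a b) → Even l.length →
    l.prod ∈ Subgroup.closure dtSet
  | [], _, _ => by simp only [List.prod_nil]; exact one_mem _
  | [τ], _, hev => by simp at hev
  | s :: t :: rest, h, hev => by
    obtain ⟨a, b, hab, ha1, hb1, rfl⟩ := h s List.mem_cons_self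
    obtain ⟨c, d, hcd, hc1, hd1, rfl⟩ := h t (List.mem_cons_of_mem _ List.mem_cons_self)
    set m := max (max a b) (max c d) with hm
    have hma : a ≤ m := le_trans (le_max_left _ _) (le_max_left _ _)
    have hmb : b ≤ m := le_trans (le_max_right _ _) (le_max_left _ _)
    have hmc : c ≤ m := le_trans (le_max_left _ _) (le_max_right _ _)
    have hmd : d ≤ m := le_trans (le_max_right _ _) (le_max_right _ _)
    set e := m + 2 with he
    set f := m + 3 with hf
    have key : Equiv.swap a b * Equiv.swap c d =
        (Equiv.swap a b * Equiv.swap e f) * (Equiv.swap e f * Equiv.swap c d) := by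
      rw [mul_assoc, ← mul_assoc (Equiv.swap e f), Equiv.swap_mul_self, one_mul]
    have h1 : Equiv.swap a b * Equiv.swap e f ∈ dtSet :=
      ⟨a, b, e, f, hab, by omega, ha1, hb1, by omega, by omega,
        by omega, by omega, by omega, by omega, rfl⟩
    have h2 : Equiv.swap e f * Equiv.swap c d ∈ dtSet :=
      ⟨e, f, c, d, by omega, hcd, by omega, by omega, hc1, hd1,
        by omega, by omega, by omega, by omega, rfl⟩
    have hrest : rest.prod ∈ Subgroup.closure dtSet := by
      apply lemE
      · intro τ hτ; exact h τ (List.mem_cons_of_mem _ (List.mem_cons_of_mem _ hτ))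
      · simpa [Nat.even_add_one, parity_simps] using hev
    rw [List.prod_cons, List.prod_cons, ← mul_assoc, key]
    exact mul_mem (mul_mem (Subgroup.subset_closure h1) (Subgroup.subset_closure h2)) hrest

lemma mem_closure_dt {σ : Equiv.Perm ℕ} (hσ : σ ∈ evenFinFixOne) :
    σ ∈ Subgroup.closure dtSet := by
  obtain ⟨⟨l, hsw, hev, hp⟩, hst⟩ := Subgroup.mem_inf.mp hσ
  have h1 : σ 1 = 1 := hst
  obtain ⟨M, hM2, hM⟩ := swap_list_bound l hsw
  have hN1 : M ≠ 1 := by omega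
  have hσN : σ M = M := by
    rw [← hp]; exact prod_fixes l M (fun τ hτ => hM τ hτ M le_rfl)
  set c := Equiv.swap 1 M with hc
  have hconj : (l.map ⇑(MulAut.conj c)).prod = σ := by
    rw [(map_list_prod (MulAut.conj c) l).symm, MulAut.conj_apply, hp, Equiv.swap_inv]
    exact conj_fix h1 hσN
  have hmem : ∀ τ ∈ l.map ⇑(MulAut.conj c),
      ∃ a b : ℕ, a ≠ b ∧ a ≠ 1 ∧ b ≠ 1 ∧ τ = Equiv.swap a b := by
    intro τ hτ
    rw [List.mem_map] at hτ
    obtain ⟨τ', hτ', rfl⟩ := hτ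
    obtain ⟨a, b, hab, rfl⟩ := hsw τ' hτ'
    have haM : a ≠ M := by
      intro hc'; subst hc'
      have := hM _ hτ' a le_rfl
      rw [Equiv.swap_apply_left] at this; exact hab this.symm
    have hbM : b ≠ M := by
      intro hc'; subst hc'
      have := hM _ hτ' b le_rfl
      rw [Equiv.swap_apply_right] at this; exact hab this
    refine ⟨c a, c b, fun hcc => hab (c.injective hcc), ?_, ?_, ?_⟩
    · intro hca
      have : a = M := by
        have : c a = c M := by rw [hca, hc, Equiv.swap_apply_right]
        exact c.injective this
      exact haM this
    · intro hcb
      have : b = M := by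
        have : c b = c M := by rw [hcb, hc, Equiv.swap_apply_right]
        exact c.injective this
      exact hbM this
    · rw [MulAut.conj_apply]
      exact (Equiv.swap_apply_apply c a b).symm
  rw [← hconj]
  exact lemE _ hmem (by simpa using hev)

/-- If `δ : G₁ → G` is a group homomorphism from the group `G₁` of finitely
supported even permutations of `ℕ` fixing `1` to the group `G` of all finitely supported even
permutations of `ℕ`, and `δ(a) = a` for every element `a` of order `2`, then `δ` is the
identity: `δ(σ) = σ` for all `σ ∈ G₁`. -/
theorem stmt4 (δ : ↥evenFinFixOne →* ↥evenFin)
    (h : ∀ a : ↥evenFinFixOne, orderOf a = 2 → ((δ a : Equiv.Perm ℕ)) = (a : Equiv.Perm ℕ)) :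
    ∀ σ : ↥evenFinFixOne, ((δ σ : Equiv.Perm ℕ)) = (σ : Equiv.Perm ℕ) := by
  have hle : Subgroup.closure dtSet ≤ evenFinFixOne :=
    (Subgroup.closure_le _).mpr fun x hx => dt_mem hx
  intro σ
  have key : ∀ (x : Equiv.Perm ℕ) (hx : x ∈ Subgroup.closure dtSet)
      (hm : x ∈ evenFinFixOne), ((δ ⟨x, hm⟩ : ↥evenFin) : Equiv.Perm ℕ) = x := by
    intro x hx
    refine Subgroup.closure_induction (k := dtSet)
      (p := fun x _ => ∀ hm : x ∈ evenFinFixOne,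
        ((δ ⟨x, hm⟩ : ↥evenFin) : Equiv.Perm ℕ) = x) ?_ ?_ ?_ ?_ hx
    · intro x hxd hm
      apply h
      have : orderOf (⟨x, hm⟩ : ↥evenFinFixOne) = orderOf x :=
        (orderOf_injective evenFinFixOne.subtype evenFinFixOne.subtype_injective ⟨x, hm⟩).symm
      rw [this]
      exact dt_orderOf hxd
    · intro hm
      have h1 : (⟨1, hm⟩ : ↥evenFinFixOne) = 1 := rfl
      rw [h1, map_one]; rfl
    · intro x y hxc hyc ihx ihy hm
      have hxm := hle hxc
      have hym := hle hyc
      have hmul : (⟨x * y, hm⟩ : ↥evenFinFixOne) = ⟨x, hxm⟩ * ⟨y, hym⟩ := rfl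
      rw [hmul, map_mul, Subgroup.coe_mul, ihx hxm, ihy hym]
    · intro x hxc ihx hm
      have hxm := hle hxc
      have hinv : (⟨x⁻¹, hm⟩ : ↥evenFinFixOne) = (⟨x, hxm⟩ : ↥evenFinFixOne)⁻¹ := rfl
      rw [hinv, map_inv, Subgroup.coe_inv, ihx hxm]
  exact key σ.1 (mem_closure_dt σ.2) σ.2
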